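/- For every integer k at least 2 and every integer s at least 3, there exists a connected finite simple graph G of order n = (k+2)·s + 1 and size m = ((k+3)/2)·n + (k−1)/2 + 1 such that no minimum cut of G is k-degenerate. (Such a graph G arises from s disjoint (k+2)-cliques C_0, …, C_{s−1} arranged in cyclic order by adding, for each i, a perfect matching of size k+2 between C_i and C_{i+1} (indices modulo s), and adding one further vertex u joined to all k+2 vertices of C_0; its only minimum cut is N_G(u) = C_0, which is a clique of order k+2 and hence not k-degenerate.) -/

import Mathlib

open SimpleGraph
open Fin.NatCast Fin.CommRing

/-- `S` is a (vertex) cut of `G`: deleting the vertices of `S` disconnects `G`. -/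
def SimpleGraph.IsCutset {V : Type*} (G : SimpleGraph V) (S : Set V) : Prop :=
  ¬ (G.induce Sᶜ).Preconnected

/-- The set `S` induces a `k`-degenerate subgraph of `G`: every non-empty
subset `T` of `S` contains a vertex with at most `k` neighbors in `T`. -/
def SimpleGraph.DegenSet {V : Type*} (G : SimpleGraph V) (k : ℕ) (S : Set V) : Prop :=
  ∀ T ⊆ S, T.Nonempty → ∃ v ∈ T, {w ∈ T | G.Adj v w}.ncard ≤ k

abbrev RV (k s : ℕ) : Type := Fin s × Fin (k+2) ⊕ Unit

def rAdj (k s : ℕ) [NeZero s] : RV k s → RV k s → Prop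
  | .inl x, .inl y => (x.1 = y.1 ∧ x.2 ≠ y.2) ∨ (y.1 = x.1 + 1 ∧ x.2 = y.2)
      ∨ (x.1 = y.1 + 1 ∧ x.2 = y.2)
  | .inl x, .inr _ => x.1 = 0
  | .inr _, .inl y => y.1 = 0
  | .inr _, .inr _ => False

lemma fin_cast_ne_zero {s : ℕ} [NeZero s] {t : ℕ} (h1 : 0 < t) (h2 : t < s) :
    (t : Fin s) ≠ 0 := by
  rw [Ne, Fin.natCast_eq_zero]
  intro h
  exact absurd (Nat.le_of_dvd h1 h) (by omega)

lemma fin_one_ne_zero {s : ℕ} [NeZero s] (hs : 2 ≤ s) : (1 : Fin s) ≠ 0 := by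
  have : ((1:ℕ) : Fin s) ≠ 0 := fin_cast_ne_zero one_pos (by omega)
  simpa using this

lemma fin_add_one_ne {s : ℕ} [NeZero s] (hs : 2 ≤ s) (i : Fin s) : i + 1 ≠ i := by
  intro h
  have : (1 : Fin s) = 0 := by
    have := add_left_cancel (a := i) (b := (1:Fin s)) (c := 0) (by simpa using h)
    simpa using this
  exact fin_one_ne_zero hs this

lemma fin_two_ne {s : ℕ} [NeZero s] (hs : 3 ≤ s) (i : Fin s) : i + 1 ≠ i - 1 := by
  intro h
  have h2 : ((2:ℕ) : Fin s) = 0 := by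
    have : i + 1 - (i - 1) = 0 := by rw [h]; ring
    have e : i + 1 - (i - 1) = ((2:ℕ) : Fin s) := by push_cast; ring
    rw [e] at this; exact this
  exact fin_cast_ne_zero (by omega) (by omega) h2

def RG (k s : ℕ) [NeZero s] (hs : 2 ≤ s) : SimpleGraph (RV k s) where
  Adj := rAdj k s
  symm := by
    constructor
    rintro (x | x) (y | y) h <;> simp [rAdj] at h ⊢ <;> tauto
  loopless := by
    constructor
    rintro (x | x) h <;> simp [rAdj] at h
    omega

section
variable {k s : ℕ} [NeZero s]

abbrev vtx {k s : ℕ} (i : Fin s) (a : Fin (k+2)) : RV k s := Sum.inl (i, a)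

lemma adj_clique (hs : 2 ≤ s) {i : Fin s} {a b : Fin (k+2)} (h : a ≠ b) :
    (RG k s hs).Adj (vtx i a) (vtx i b) := Or.inl ⟨rfl, h⟩

lemma adj_next (hs : 2 ≤ s) (i : Fin s) (a : Fin (k+2)) :
    (RG k s hs).Adj (vtx i a) (vtx (i+1) a) := Or.inr (Or.inl ⟨rfl, rfl⟩)

lemma adj_u (hs : 2 ≤ s) (a : Fin (k+2)) :
    (RG k s hs).Adj (Sum.inr ()) (vtx 0 a) := rfl

lemma reach_of_adj (hs : 2 ≤ s) {S : Set (RV k s)} {x y : RV k s}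
    (hx : x ∈ Sᶜ) (hy : y ∈ Sᶜ) (h : (RG k s hs).Adj x y) :
    ((RG k s hs).induce Sᶜ).Reachable ⟨x, hx⟩ ⟨y, hy⟩ :=
  SimpleGraph.Adj.reachable h

lemma reach_eq {W : Type*} {G : SimpleGraph W} {S : Set W} {x y : W}
    (hx : x ∉ S) (h : x = y) (hy : y ∉ S) : (G.induce Sᶜ).Reachable ⟨x, hx⟩ ⟨y, hy⟩ := by
  subst h; exact Reachable.refl _

lemma reach_clique (hs : 2 ≤ s) {S : Set (RV k s)} {i : Fin s} {a b : Fin (k+2)}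
    (ha : vtx i a ∈ Sᶜ) (hb : vtx i b ∈ Sᶜ) :
    ((RG k s hs).induce Sᶜ).Reachable ⟨vtx i a, ha⟩ ⟨vtx i b, hb⟩ := by
  by_cases h : a = b
  · exact reach_eq ha (by rw [h]) hb
  · exact reach_of_adj hs ha hb (adj_clique hs h)

def aliveJ (S : Set (RV k s)) (j : Fin s) : Prop :=
  ∃ c : Fin (k+2), vtx j c ∉ S ∧ vtx (j+1) c ∉ S

lemma chain (hs : 2 ≤ s) (S : Set (RV k s)) :
    ∀ (t : ℕ) (j : Fin s), (∀ u : ℕ, u < t → aliveJ S (j + (u : Fin s))) →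
      ∀ (a b : Fin (k+2)) (ha : vtx j a ∉ S) (hb : vtx (j + (t : Fin s)) b ∉ S),
      ((RG k s hs).induce Sᶜ).Reachable ⟨vtx j a, ha⟩ ⟨vtx (j + (t : Fin s)) b, hb⟩ := by
  intro t
  induction t with
  | zero =>
    intro j _ a b ha hb
    have hj : j + ((0:ℕ) : Fin s) = j := by push_cast; ring
    have hb2 : vtx j b ∉ S := by rw [hj] at hb; exact hb
    exact (reach_clique hs ha hb2).trans (reach_eq hb2 (by rw [hj]) hb)
  | succ t ih =>
    intro j hall a b ha hb
    obtain ⟨c, hc1, hc2⟩ := by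
      have := hall 0 (by omega)
      simpa using this
    have hcast : j + ((t+1 : ℕ) : Fin s) = (j + 1) + ((t : ℕ) : Fin s) := by
      push_cast; ring
    have hb' : vtx ((j+1) + (t : Fin s)) b ∉ S := by rw [← hcast]; exact hb
    have step1 : ((RG k s hs).induce Sᶜ).Reachable ⟨vtx j a, ha⟩ ⟨vtx (j+1) c, hc2⟩ :=
      (reach_clique hs ha hc1).trans (reach_of_adj hs hc1 hc2 (adj_next hs j c))
    have step2 := ih (j+1) (fun u hu => by
      have := hall (u+1) (by omega)
      have e : j + ((u+1 : ℕ) : Fin s) = (j + 1) + ((u : ℕ) : Fin s) := by push_cast; ring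
      rwa [e] at this) c b hc2 hb'
    exact (step1.trans step2).trans (reach_eq hb' (by rw [hcast]) hb)

end

section
variable {k s : ℕ} [NeZero s]

lemma vtx_inj {j : Fin s} : Function.Injective (fun c : Fin (k+2) => (vtx j c : RV k s)) := by
  intro a b h
  simpa [vtx] using h

lemma vtx_eq_iff {i j : Fin s} {a b : Fin (k+2)} :
    (vtx i a : RV k s) = vtx j b ↔ i = j ∧ a = b := by
  simp [vtx]

lemma cast_ne_cast {d1 d2 : ℕ} (h1 : d1 < s) (h2 : d2 < s) (hne : d1 ≠ d2) :
    (d1 : Fin s) ≠ (d2 : Fin s) := by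
  intro h
  have := congrArg Fin.val h
  simp only [Fin.val_natCast] at this
  rw [Nat.mod_eq_of_lt h1, Nat.mod_eq_of_lt h2] at this
  exact hne this

lemma fin_add_ne {j : Fin s} {d1 d2 : ℕ} (h1 : d1 < s) (h2 : d2 < s) (hne : d1 ≠ d2) :
    j + (d1 : Fin s) ≠ j + (d2 : Fin s) := by
  intro h
  exact cast_ne_cast h1 h2 hne (add_left_cancel h)

lemma sub_one_eq (hs : 1 ≤ s) (j : Fin s) : j - 1 = j + ((s-1 : ℕ) : Fin s) := by
  have : ((s-1 : ℕ) : Fin s) + 1 = 0 := by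
    have : (((s-1)+1 : ℕ) : Fin s) = 0 := by
      rw [show s - 1 + 1 = s by omega]; exact Fin.natCast_self s
    push_cast at this; exact this
  have h2 : ((s-1 : ℕ) : Fin s) = -1 := by linear_combination this
  rw [h2]; ring

lemma cliqueS_ncard (j : Fin s) :
    ((fun c : Fin (k+2) => (vtx j c : RV k s)) '' Set.univ).ncard = k + 2 := by
  rw [Set.ncard_image_of_injective _ vtx_inj, Set.ncard_univ]
  simp

lemma dead_clique_eq {S : Set (RV k s)} (hS : S.ncard ≤ k+2) {j1 : Fin s}
    (hd : ∀ c, vtx j1 c ∈ S) : S = (fun c : Fin (k+2) => (vtx j1 c : RV k s)) '' Set.univ := by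
  refine (Set.eq_of_subset_of_ncard_le ?_ ?_ (Set.toFinite S)).symm
  · rintro x ⟨c, -, rfl⟩; exact hd c
  · rw [cliqueS_ncard]; exact hS

open Classical in
lemma dead_junction_decomp {S : Set (RV k s)} (hs2 : 2 ≤ s) (hS : S.ncard ≤ k+2) {j : Fin s}
    (hd : ∀ c, vtx j c ∈ S ∨ vtx (j+1) c ∈ S) :
    ∀ x ∈ S, ∃ c, x = (vtx j c : RV k s) ∨ x = vtx (j+1) c := by
  set f : Fin (k+2) → RV k s := fun c => if vtx j c ∈ S then vtx j c else vtx (j+1) c with hf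
  have hinj : Function.Injective f := by
    intro a b h
    simp only [hf] at h
    split_ifs at h with h1 h2 h2 <;> rw [vtx_eq_iff] at h
    · exact h.2
    · exact absurd h.1 (fin_add_one_ne hs2 j).symm
    · exact absurd h.1.symm (by intro hh; exact (fin_add_one_ne hs2 j) hh.symm)
    · exact h.2
  have hsub : f '' Set.univ ⊆ S := by
    rintro x ⟨c, -, rfl⟩
    simp only [hf]
    split_ifs with h1
    · exact h1
    · exact (hd c).resolve_left h1
  have hcard : (f '' Set.univ).ncard = k + 2 := by
    rw [Set.ncard_image_of_injective _ hinj, Set.ncard_univ]; simp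
  have hSeq : S = f '' Set.univ :=
    (Set.eq_of_subset_of_ncard_le hsub (by rw [hcard]; exact hS) (Set.toFinite S)).symm
  intro x hx
  rw [hSeq] at hx
  obtain ⟨c, -, rfl⟩ := hx
  refine ⟨c, ?_⟩
  simp only [hf]
  split_ifs <;> simp

lemma not_aliveJ {S : Set (RV k s)} {j : Fin s} (h : ¬ aliveJ S j) :
    ∀ c, vtx j c ∈ S ∨ vtx (j+1) c ∈ S := by
  intro c
  by_contra hc
  push_neg at hc
  exact h ⟨c, hc.1, hc.2⟩

lemma atMostOne (hs : 3 ≤ s) {S : Set (RV k s)} (hS : S.ncard ≤ k+2)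
    (hsur : ∀ j1 : Fin s, ∃ c, vtx j1 c ∉ S)
    {j j' : Fin s} (hdj : ¬ aliveJ S j) (hdj' : ¬ aliveJ S j') : j = j' := by
  have hd := not_aliveJ hdj
  have hd' := not_aliveJ hdj'
  have key := dead_junction_decomp (by omega) hS hd
  have key' := dead_junction_decomp (by omega) hS hd'
  by_contra hne
  -- helper inequalities
  have h10 : j + (1:Fin s) ≠ j := fin_add_one_ne (by omega) j
  by_cases hc1 : j' = j + 1
  · -- S avoids clique j+2 and j; show C_{j+1} ⊆ S
    subst hc1
    obtain ⟨c0, hc0⟩ := hsur (j + 1)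
    rcases hd' c0 with h | h
    · exact hc0 h
    · -- vtx (j+1+1) c0 ∈ S : contradiction with key
      obtain ⟨c', hc'⟩ := key _ h
      rcases hc' with h2 | h2 <;> rw [vtx_eq_iff] at h2
      · have he : j + ((2:ℕ):Fin s) = j + ((0:ℕ):Fin s) := by push_cast; linear_combination h2.1
        exact fin_add_ne (by omega) (by omega) (by omega) he
      · have he : j + ((2:ℕ):Fin s) = j + ((1:ℕ):Fin s) := by push_cast; linear_combination h2.1
        exact fin_add_ne (by omega) (by omega) (by omega) he
  · by_cases hc2 : j = j' + 1
    · subst hc2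
      obtain ⟨c0, hc0⟩ := hsur (j' + 1)
      rcases hd c0 with h | h
      · -- vtx (j'+1) c0 ∈ S contradiction with hc0
        exact hc0 h
      · -- vtx (j'+2) c0 ∈ S, but S ⊆ C_{j'} ∪ C_{j'+1}
        obtain ⟨c', hc'⟩ := key' _ h
        rcases hc' with h2 | h2 <;> rw [vtx_eq_iff] at h2
        · have he : j' + ((2:ℕ):Fin s) = j' + ((0:ℕ):Fin s) := by push_cast; linear_combination h2.1
          exact fin_add_ne (by omega) (by omega) (by omega) he
        · have he : j' + ((2:ℕ):Fin s) = j' + ((1:ℕ):Fin s) := by push_cast; linear_combination h2.1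
          exact fin_add_ne (by omega) (by omega) (by omega) he
    · -- disjoint case
      rcases hd (0 : Fin (k+2)) with h | h <;> obtain ⟨c', hc'⟩ := key' _ h <;>
        rcases hc' with h2 | h2 <;> rw [vtx_eq_iff] at h2
      · exact hne h2.1
      · exact hc2 h2.1
      · exact hc1 h2.1.symm
      · exact hne (add_right_cancel h2.1)
end

section
variable {k s : ℕ} [NeZero s]

lemma cast_val_self (a : Fin s) : ((a.val : ℕ) : Fin s) = a := by
  simp [Fin.cast_val_eq_self]

lemma ringRoute (hs2 : 2 ≤ s) (hs : 3 ≤ s) {S : Set (RV k s)} (hS : S.ncard ≤ k+2)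
    {i j : Fin s} {a b : Fin (k+2)} (hx : vtx i a ∉ S) (hy : vtx j b ∉ S) :
    ((RG k s hs2).induce Sᶜ).Reachable ⟨vtx i a, hx⟩ ⟨vtx j b, hy⟩ := by
  by_cases hdead : ∃ j1 : Fin s, ∀ c, vtx j1 c ∈ S
  · obtain ⟨j1, hd⟩ := hdead
    have hSeq := dead_clique_eq hS hd
    have hmem : ∀ (t : Fin s) (c : Fin (k+2)), t ≠ j1 → vtx t c ∉ S := by
      rw [hSeq]
      rintro t c ht ⟨c', -, hEq⟩
      exact ht ((vtx_eq_iff.mp hEq).1.symm)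
    have hij1 : i ≠ j1 := fun h => hx (h ▸ hd a)
    have hjj1 : j ≠ j1 := fun h => hy (h ▸ hd b)
    set p := (i - j1).val with hpdef
    set q := (j - j1).val with hqdef
    have hip : j1 + ((p : ℕ) : Fin s) = i := by
      rw [hpdef, cast_val_self]; ring
    have hjq : j1 + ((q : ℕ) : Fin s) = j := by
      rw [hqdef, cast_val_self]; ring
    have hps : p < s := (i - j1).isLt
    have hqs : q < s := (j - j1).isLt
    have hp1 : 1 ≤ p := by
      by_contra h
      push_neg at h
      apply hij1
      rw [← hip, show p = 0 by omega]; push_cast; ring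
    have hq1 : 1 ≤ q := by
      by_contra h
      push_neg at h
      apply hjj1
      rw [← hjq, show q = 0 by omega]; push_cast; ring
    have halive : ∀ v : ℕ, 1 ≤ v → v + 1 ≤ s - 1 → aliveJ S (j1 + (v : Fin s)) := by
      intro v h1 h2
      refine ⟨0, hmem _ 0 ?_, hmem _ 0 ?_⟩
      · intro h
        have : j1 + ((v:ℕ) : Fin s) = j1 + ((0:ℕ) : Fin s) := by rw [h]; push_cast; ring
        exact fin_add_ne (by omega) (by omega) (by omega) this
      · intro h
        have : j1 + (((v+1):ℕ) : Fin s) = j1 + ((0:ℕ) : Fin s) := by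
          push_cast
          linear_combination h
        exact fin_add_ne (by omega) (by omega) (by omega) this
    rcases le_total p q with hle | hle
    · have he : i + (((q - p : ℕ)) : Fin s) = j := by
        rw [← hip, ← hjq]
        have : ((q - p : ℕ) : Fin s) = (q : Fin s) - (p : Fin s) := by
          have : ((p + (q - p) : ℕ) : Fin s) = ((q:ℕ) : Fin s) := by
            rw [show p + (q-p) = q by omega]
          push_cast at this
          linear_combination this
        rw [this]; ring
      have hy' : vtx (i + ((q - p : ℕ) : Fin s)) b ∉ S := by rw [he]; exact hy
      have hjcond : ∀ u : ℕ, u < q - p → aliveJ S (i + (u : Fin s)) := by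
        intro u hu
        have : i + ((u:ℕ) : Fin s) = j1 + (((p + u : ℕ)) : Fin s) := by
          rw [← hip]; push_cast; ring
        rw [this]
        exact halive (p+u) (by omega) (by omega)
      exact (chain hs2 S (q-p) i hjcond a b hx hy').trans (reach_eq hy' (by rw [he]) hy)
    · have he : j + (((p - q : ℕ)) : Fin s) = i := by
        rw [← hip, ← hjq]
        have : ((p - q : ℕ) : Fin s) = (p : Fin s) - (q : Fin s) := by
          have : ((q + (p - q) : ℕ) : Fin s) = ((p:ℕ) : Fin s) := by
            rw [show q + (p-q) = p by omega]
          push_cast at this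
          linear_combination this
        rw [this]; ring
      have hx' : vtx (j + ((p - q : ℕ) : Fin s)) a ∉ S := by rw [he]; exact hx
      have hjcond : ∀ u : ℕ, u < p - q → aliveJ S (j + (u : Fin s)) := by
        intro u hu
        have : j + ((u:ℕ) : Fin s) = j1 + (((q + u : ℕ)) : Fin s) := by
          rw [← hjq]; push_cast; ring
        rw [this]
        exact halive (q+u) (by omega) (by omega)
      exact ((chain hs2 S (p-q) j hjcond b a hy hx').trans (reach_eq hx' (by rw [he]) hx)).symm
  · push_neg at hdead
    set t := (j - i).val with htdef
    have hji : i + ((t : ℕ) : Fin s) = j := by rw [htdef, cast_val_self]; ring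
    have hts : t < s := (j - i).isLt
    by_cases hall : ∀ u : ℕ, u < t → aliveJ S (i + (u : Fin s))
    · have hy' : vtx (i + (t : Fin s)) b ∉ S := by rw [hji]; exact hy
      exact (chain hs2 S t i hall a b hx hy').trans (reach_eq hy' (by rw [hji]) hy)
    · push_neg at hall
      obtain ⟨u1, hu1, hdead1⟩ := hall
      have hall' : ∀ u : ℕ, u < s - t → aliveJ S (j + (u : Fin s)) := by
        intro u2 hu2
        by_contra hdd
        have heq := atMostOne hs hS hdead hdead1 hdd
        have : i + ((u1 : ℕ) : Fin s) = i + (((t + u2 : ℕ)) : Fin s) := by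
          rw [heq, ← hji]; push_cast; ring
        exact fin_add_ne (by omega) (by omega) (by omega) this
      have he : j + (((s - t : ℕ)) : Fin s) = i := by
        rw [← hji]
        have : (((t + (s - t)) : ℕ) : Fin s) = 0 := by
          rw [show t + (s - t) = s by omega]; exact Fin.natCast_self s
        push_cast at this
        linear_combination this
      have hx' : vtx (j + ((s - t : ℕ) : Fin s)) a ∉ S := by rw [he]; exact hx
      exact ((chain hs2 S (s-t) j hall' b a hy hx').trans (reach_eq hx' (by rw [he]) hx)).symm
end

section
variable {k s : ℕ} [NeZero s]

def C0 (k s : ℕ) [NeZero s] : Set (RV k s) := (fun c : Fin (k+2) => (vtx 0 c : RV k s)) '' Set.univ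

lemma C0_ncard : (C0 k s).ncard = k + 2 := cliqueS_ncard 0

lemma keyB (hs2 : 2 ≤ s) (hs : 3 ≤ s) {S : Set (RV k s)} (hS : S.ncard ≤ k+2)
    {a0 : Fin (k+2)} (h0 : vtx (0 : Fin s) a0 ∉ S) :
    ((RG k s hs2).induce Sᶜ).Preconnected := by
  have base : ∀ (z : RV k s) (hz : z ∈ Sᶜ),
      ((RG k s hs2).induce Sᶜ).Reachable ⟨z, hz⟩ ⟨vtx 0 a0, h0⟩ := by
    rintro (⟨i, a⟩ | u) hz
    · exact ringRoute hs2 hs hS hz h0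
    · exact reach_of_adj hs2 hz h0 (adj_u hs2 a0)
  intro x y
  exact (base x.1 x.2).trans (base y.1 y.2).symm

lemma no_walk {W : Type*} {G : SimpleGraph W} {x y : W} (hxy : x ≠ y)
    (hdeg : ∀ z, ¬ G.Adj x z) : ¬ G.Reachable x y := by
  rintro ⟨w⟩
  cases w with
  | nil => exact hxy rfl
  | cons h p => exact hdeg _ h

lemma isCutset_C0 (hs2 : 2 ≤ s) : (RG k s hs2).IsCutset (C0 k s) := by
  intro hpre
  have hu : (Sum.inr () : RV k s) ∈ (C0 k s)ᶜ := by
    rintro ⟨c, -, hc⟩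
    exact absurd hc (by simp [vtx])
  have hv : (vtx 1 (0 : Fin (k+2)) : RV k s) ∈ (C0 k s)ᶜ := by
    rintro ⟨c, -, hc⟩
    rw [vtx_eq_iff] at hc
    exact fin_one_ne_zero hs2 hc.1.symm
  refine no_walk (G := (RG k s hs2).induce (C0 k s)ᶜ)
      (x := ⟨Sum.inr (), hu⟩) (y := ⟨vtx 1 0, hv⟩) ?_ ?_ (hpre _ _)
  · intro h
    have := congrArg Subtype.val h
    simp [vtx] at this
  · rintro ⟨(⟨i, a⟩ | u), hz⟩ h
    · have hi : i = 0 := h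
      exact hz ⟨a, Set.mem_univ a, by rw [vtx_eq_iff]; exact ⟨hi.symm, rfl⟩⟩
    · exact h

lemma notDegen (hs2 : 2 ≤ s) {S : Set (RV k s)} (hsub : C0 k s ⊆ S) :
    ¬ (RG k s hs2).DegenSet k S := by
  intro hdeg
  obtain ⟨v, hv, hcard⟩ := hdeg (C0 k s) hsub ⟨vtx 0 0, ⟨0, Set.mem_univ _, rfl⟩⟩
  obtain ⟨b, -, rfl⟩ := hv
  have hset : {w ∈ C0 k s | (RG k s hs2).Adj (vtx 0 b) w}
      = (fun c : Fin (k+2) => (vtx 0 c : RV k s)) '' {c | c ≠ b} := by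
    ext x
    constructor
    · rintro ⟨⟨c, -, rfl⟩, hadj⟩
      refine ⟨c, ?_, rfl⟩
      rcases hadj with ⟨-, hne⟩ | ⟨h01, -⟩ | ⟨h01, -⟩
      · exact fun h => hne (h ▸ rfl)
      · exact absurd h01.symm (fin_add_one_ne hs2 0)
      · exact absurd h01.symm (fin_add_one_ne hs2 0)
    · rintro ⟨c, hc, rfl⟩
      exact ⟨⟨c, Set.mem_univ _, rfl⟩, Or.inl ⟨rfl, Ne.symm hc⟩⟩
  rw [hset, Set.ncard_image_of_injective _ vtx_inj] at hcard
  have h1 : ({c : Fin (k+2) | c ≠ b}).ncard = k + 1 := by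
    have h2 : ({c : Fin (k+2) | c ≠ b}) = ({b} : Set (Fin (k+2)))ᶜ := by
      ext c; simp
    rw [h2]
    have := Set.ncard_add_ncard_compl ({b} : Set (Fin (k+2)))
    rw [Set.ncard_singleton] at this
    simp only [Nat.card_eq_fintype_card, Fintype.card_fin] at this
    omega
  omega
end

section
variable {k s : ℕ} [NeZero s]

lemma nbr_inr (hs2 : 2 ≤ s) : (RG k s hs2).neighborSet (Sum.inr ()) = C0 k s := by
  ext x
  cases x with
  | inl p =>
    obtain ⟨i, a⟩ := p
    constructor
    · intro h
      exact ⟨a, Set.mem_univ _, by rw [vtx_eq_iff]; exact ⟨(show i = 0 from h).symm, rfl⟩⟩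
    · rintro ⟨c, -, hc⟩
      rw [vtx_eq_iff] at hc
      exact (show i = 0 from hc.1.symm)
  | inr u =>
    constructor
    · intro h; exact absurd h (by simp [SimpleGraph.neighborSet, RG, rAdj])
    · rintro ⟨c, -, hc⟩; exact absurd hc (by simp [vtx])

lemma adj_inl_iff (hs2 : 2 ≤ s) {i j : Fin s} {a b : Fin (k+2)} :
    (RG k s hs2).Adj (vtx i a) (Sum.inl (j, b)) ↔
      ((i = j ∧ a ≠ b) ∨ (j = i + 1 ∧ a = b) ∨ (i = j + 1 ∧ a = b)) := Iff.rfl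

lemma adj_inl_inr_iff (hs2 : 2 ≤ s) {i : Fin s} {a : Fin (k+2)} :
    (RG k s hs2).Adj (vtx i a) (Sum.inr ()) ↔ i = 0 := Iff.rfl

lemma nbr_inl (hs2 : 2 ≤ s) (hs : 3 ≤ s) (i : Fin s) (a : Fin (k+2)) :
    (RG k s hs2).neighborSet (vtx i a)
      = (fun c : Fin (k+2) => (vtx i c : RV k s)) '' {c | c ≠ a}
        ∪ {(vtx (i+1) a : RV k s), vtx (i-1) a}
        ∪ (if i = 0 then {(Sum.inr () : RV k s)} else ∅) := by
  ext x
  cases x with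
  | inl p =>
    obtain ⟨j, b⟩ := p
    have hite : (Sum.inl (j,b) : RV k s) ∈
        (if i = 0 then ({(Sum.inr () : RV k s)} : Set (RV k s)) else ∅) ↔ False := by
      split_ifs <;> simp
    rw [SimpleGraph.mem_neighborSet, adj_inl_iff hs2, Set.mem_union, Set.mem_union, hite,
      or_false, Set.mem_image, Set.mem_insert_iff, Set.mem_singleton_iff]
    simp only [Set.mem_setOf_eq, vtx, Sum.inl.injEq, Prod.mk.injEq]
    constructor
    · rintro (⟨hij, hab⟩ | ⟨hj, hab⟩ | ⟨hi, hab⟩)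
      · exact Or.inl ⟨b, Ne.symm hab, hij, rfl⟩
      · exact Or.inr (Or.inl ⟨hj, hab.symm⟩)
      · exact Or.inr (Or.inr ⟨eq_sub_of_add_eq hi.symm, hab.symm⟩)
    · rintro (⟨c, hc, h1, h2⟩ | ⟨h1, h2⟩ | ⟨h1, h2⟩)
      · exact Or.inl ⟨h1, by rw [← h2]; exact Ne.symm hc⟩
      · exact Or.inr (Or.inl ⟨h1, h2.symm⟩)
      · refine Or.inr (Or.inr ⟨?_, h2.symm⟩)
        rw [h1]; ring
  | inr u =>
    obtain ⟨⟩ := u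
    have h1 : ((Sum.inr () : RV k s) ∈ (fun c : Fin (k+2) => (vtx i c : RV k s)) '' {c | c ≠ a}
        ∪ {(vtx (i+1) a : RV k s), vtx (i-1) a}) ↔ False := by
      simp [vtx]
    rw [SimpleGraph.mem_neighborSet, adj_inl_inr_iff hs2, Set.mem_union, h1, false_or]
    split_ifs with h0
    · simp [h0]
    · simp [h0]

lemma ncard_nbr_inl (hs2 : 2 ≤ s) (hs : 3 ≤ s) (i : Fin s) (a : Fin (k+2)) :
    ((RG k s hs2).neighborSet (vtx i a)).ncard = k + 3 + (if i = 0 then 1 else 0) := by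
  rw [nbr_inl hs2 hs i a]
  have hA : ((fun c : Fin (k+2) => (vtx i c : RV k s)) '' {c | c ≠ a}).ncard = k + 1 := by
    rw [Set.ncard_image_of_injective _ vtx_inj]
    have h2 : ({c : Fin (k+2) | c ≠ a}) = ({a} : Set (Fin (k+2)))ᶜ := by ext c; simp
    rw [h2]
    have := Set.ncard_add_ncard_compl ({a} : Set (Fin (k+2)))
    rw [Set.ncard_singleton] at this
    simp only [Nat.card_eq_fintype_card, Fintype.card_fin] at this
    omega
  have hB : ({(vtx (i+1) a : RV k s), vtx (i-1) a} : Set (RV k s)).ncard = 2 := by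
    refine Set.ncard_pair ?_
    rw [Ne, vtx_eq_iff, not_and_or]
    exact Or.inl (fin_two_ne hs i)
  have hAB : Disjoint ((fun c : Fin (k+2) => (vtx i c : RV k s)) '' {c | c ≠ a})
      ({(vtx (i+1) a : RV k s), vtx (i-1) a} : Set (RV k s)) := by
    rw [Set.disjoint_left]
    rintro x ⟨c, -, rfl⟩ hx
    rcases hx with hx | hx
    · have hx' : (vtx i c : RV k s) = vtx (i+1) a := hx
      rw [vtx_eq_iff] at hx'
      exact fin_add_one_ne hs2 i hx'.1.symm
    · have hx' : (vtx i c : RV k s) = vtx (i-1) a := hx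
      rw [vtx_eq_iff] at hx'
      have h2 : i - 1 = i + ((s-1 : ℕ) : Fin s) := sub_one_eq (by omega) i
      have h3 : i + ((0:ℕ) : Fin s) = i + ((s-1 : ℕ) : Fin s) := by
        rw [← h2]
        push_cast
        linear_combination hx'.1
      exact fin_add_ne (by omega) (by omega) (by omega) h3
  have hABn : (((fun c : Fin (k+2) => (vtx i c : RV k s)) '' {c | c ≠ a})
      ∪ ({(vtx (i+1) a : RV k s), vtx (i-1) a} : Set (RV k s))).ncard = k + 3 := by
    rw [Set.ncard_union_eq hAB (Set.toFinite _) (Set.toFinite _), hA, hB]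
  split_ifs with h0
  · rw [Set.ncard_union_eq ?_ (Set.toFinite _) (Set.toFinite _), hABn, Set.ncard_singleton]
    rw [Set.disjoint_left]
    rintro x hx hxx
    rw [Set.mem_singleton_iff] at hxx
    subst hxx
    rcases hx with ⟨c, -, hc⟩ | hx
    · exact absurd hc (by simp [vtx])
    · rcases hx with hx | hx <;> exact absurd hx (by simp [vtx])
  · rw [Set.union_empty, hABn]

lemma ncard_nbr_inr (hs2 : 2 ≤ s) : ((RG k s hs2).neighborSet (Sum.inr ())).ncard = k + 2 := by
  rw [nbr_inr hs2, C0_ncard]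
end

section
variable {k s : ℕ} [NeZero s]

lemma vert_count : (Set.univ : Set (RV k s)).ncard = (k+2)*s + 1 := by
  rw [Set.ncard_univ, Nat.card_eq_fintype_card]
  simp only [RV, Fintype.card_sum, Fintype.card_prod, Fintype.card_fin, Fintype.card_unit]
  ring

lemma edge_count (hs2 : 2 ≤ s) (hs : 3 ≤ s) :
    2 * (RG k s hs2).edgeSet.ncard = (k+2) * ((k+3) * s + 2) := by
  classical
  have hdeg : ∀ v : RV k s, (RG k s hs2).degree v = ((RG k s hs2).neighborSet v).ncard := by
    intro v
    rw [SimpleGraph.degree, SimpleGraph.neighborFinset, ← Set.ncard_eq_toFinset_card']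
  have hE : (RG k s hs2).edgeSet.ncard = (RG k s hs2).edgeFinset.card := by
    rw [SimpleGraph.edgeFinset, ← Set.ncard_eq_toFinset_card']
  have hsum := SimpleGraph.sum_degrees_eq_twice_card_edges (RG k s hs2)
  rw [hE, ← hsum]
  have h1 : ∀ v : RV k s, (RG k s hs2).degree v
      = (match v with
         | Sum.inl p => k + 3 + (if p.1 = 0 then 1 else 0)
         | Sum.inr _ => k + 2) := by
    rintro (⟨i, a⟩ | ⟨⟩)
    · rw [hdeg, ncard_nbr_inl hs2 hs i a]
    · rw [hdeg, ncard_nbr_inr hs2]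
  rw [Finset.sum_congr rfl (fun v _ => h1 v)]
  rw [Fintype.sum_sum_type]
  simp only [Fintype.sum_prod_type, Finset.sum_const, Finset.card_univ, Fintype.card_unit,
    Fintype.card_fin, smul_eq_mul, one_mul, Finset.sum_const, Finset.card_univ]
  have h2 : ∑ i : Fin s, ∑ _a : Fin (k+2), (k + 3 + (if i = 0 then 1 else 0))
      = s * ((k+2)*(k+3)) + (k+2) := by
    have h3 : ∀ i : Fin s, ∑ _a : Fin (k+2), (k + 3 + (if i = 0 then 1 else 0))
        = (k+2)*(k+3) + (k+2) * (if i = 0 then 1 else 0) := by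
      intro i
      rw [Finset.sum_const, Finset.card_univ, Fintype.card_fin, smul_eq_mul, mul_add]
    rw [Finset.sum_congr rfl (fun i _ => h3 i), Finset.sum_add_distrib, Finset.sum_const,
      Finset.card_univ, Fintype.card_fin, smul_eq_mul, ← Finset.mul_sum]
    have h4 : ∑ i : Fin s, (if i = 0 then 1 else 0) = 1 := by
      rw [Finset.sum_ite_eq' Finset.univ (0 : Fin s) (fun _ => 1)]
      simp
    rw [h4, mul_one]
  rw [show (∑ x : Fin s, ∑ _x_1 : Fin (k + 2), (k + 3 + if x = 0 then 1 else 0)) =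
    s * ((k+2)*(k+3)) + (k+2) from h2]
  ring

lemma RG_connected (hs2 : 2 ≤ s) (hs : 3 ≤ s) : (RG k s hs2).Connected := by
  rw [SimpleGraph.connected_iff]
  refine ⟨?_, ⟨Sum.inr ()⟩⟩
  intro x y
  have hpre := keyB (k := k) hs2 hs (S := (∅ : Set (RV k s))) (by simp) (a0 := 0)
    (Set.notMem_empty _)
  have hx : x ∈ (∅ : Set (RV k s))ᶜ := Set.mem_compl (Set.notMem_empty _)
  have hy : y ∈ (∅ : Set (RV k s))ᶜ := Set.mem_compl (Set.notMem_empty _)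
  have h := (hpre ⟨x, hx⟩ ⟨y, hy⟩).map (SimpleGraph.Embedding.induce _).toHom
  simpa using h

end

theorem stmt7 (k s : ℕ) (hk : 2 ≤ k) (hs : 3 ≤ s) :
    ∃ (V : Type) (G : SimpleGraph V), Finite V ∧ G.Connected ∧
      (Set.univ : Set V).ncard = (k + 2) * s + 1 ∧
      (G.edgeSet.ncard : ℝ)
        = ((k : ℝ) + 3) / 2 * (((k + 2) * s + 1 : ℕ) : ℝ) + ((k : ℝ) - 1) / 2 + 1 ∧
      ∀ S : Set V, G.IsCutset S → (∀ T : Set V, G.IsCutset T → S.ncard ≤ T.ncard) →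
        ¬ G.DegenSet k S := by
  haveI : NeZero s := ⟨by omega⟩
  have hs2 : 2 ≤ s := by omega
  refine ⟨RV k s, RG k s hs2, Finite.instSum, RG_connected hs2 hs, vert_count, ?_, ?_⟩
  · have h2E := edge_count (k := k) hs2 hs
    have hc := congrArg (fun n : ℕ => (n : ℝ)) h2E
    push_cast at hc ⊢
    linear_combination hc / 2
  · intro S hcut hmin
    have hC0cut := isCutset_C0 (k := k) hs2
    have hSC0 : S.ncard ≤ k + 2 := by
      have := hmin (C0 k s) hC0cut
      rwa [C0_ncard] at this
    have hsub : C0 k s ⊆ S := by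
      by_contra hns
      obtain ⟨x, hxC0, hxS⟩ := Set.not_subset.mp hns
      obtain ⟨c, -, rfl⟩ := hxC0
      exact hcut (keyB hs2 hs hSC0 hxS)
    exact notDegen hs2 hsub
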